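/- Let m ≥ 2 and n = 2^{m+1} - 4. In ℤ/2[w2, w3], define for 0 ≤ i ≤ m the polynomial P_i = Σ w2^p w3^{(2^i + n + 1 - 2p)/3}, where the sum is over all p with 0 ≤ p < 2^m whose binary digits end in i zeros, i.e., ε_m(p) = (q, 0,...,0) with q ∈ Δ_{m-i} (and (2^i+n+1-2p) divisible by 3). Then for all 0 ≤ i ≤ m-2, the S-polynomial relation S(P_i, P_{i+1}) = P_{i+2} holds, where S(F,G) = (LCM(LT(F),LT(G))/LT(F))·F + (LCM(LT(F),LT(G))/LT(G))·G using the lexicographic monomial order with w2 > w3. -/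

import Mathlib

open MvPolynomial

open scoped Classical in
/-- `InDelta k p` : the `k`-bit binary string of `p` lies in `Δ_k`
(convention `p_{-1} = 1`): whenever `p_{l-1} = 1` and `p_l = ⋯ = p_{l+2t} = 0`,
then `p_{l+2t+1} = 0`. -/
def InDelta (k p : ℕ) : Prop :=
  ∀ l t : ℕ, l + 2 * t + 1 ≤ k - 1 →
    (l = 0 ∨ p.testBit (l - 1) = true) →
    (∀ j, l ≤ j → j ≤ l + 2 * t → p.testBit j = false) →
    p.testBit (l + 2 * t + 1) = false

/-- `k`-independent version of `InDelta`. -/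
def DeltaP (s : ℕ) : Prop :=
  ∀ l t : ℕ, (l = 0 ∨ s.testBit (l - 1) = true) →
    (∀ j, l ≤ j → j ≤ l + 2 * t → s.testBit j = false) →
    s.testBit (l + 2 * t + 1) = false

lemma inDelta_iff_deltaP {k s : ℕ} (h : s < 2 ^ k) : InDelta k s ↔ DeltaP s := by
  constructor
  · intro H l t h1 h2
    by_cases hb : l + 2 * t + 1 ≤ k - 1
    · exact H l t hb h1 h2
    · exact Nat.testBit_lt_two_pow
        (lt_of_lt_of_le h (Nat.pow_le_pow_right (by norm_num) (by omega)))
  · intro H l t _ h1 h2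
    exact H l t h1 h2

lemma deltaP_two_mul_add_one (u : ℕ) : DeltaP (2 * u + 1) ↔ DeltaP u := by
  have key : ∀ j, (2 * u + 1).testBit (j + 1) = u.testBit j := by
    intro j; rw [Nat.testBit_add_one]; congr 1; omega
  have h0 : (2 * u + 1).testBit 0 = true := by
    rw [Nat.testBit_zero]; simp [Nat.mul_add_mod]
  constructor
  · intro H l t h1 h2
    have := H (l + 1) t ?_ ?_
    · rw [show l + 1 + 2 * t + 1 = (l + 2 * t + 1) + 1 by ring, key] at this
      exact this
    · rcases h1 with h1 | h1
      · subst h1; exact Or.inr (by simpa using h0)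
      · right
        rcases Nat.eq_zero_or_pos l with rfl | hl
        · simpa using h0
        · rw [show l + 1 - 1 = (l - 1) + 1 by omega, key]; exact h1
    · intro j hj hj'
      rw [show j = (j - 1) + 1 by omega, key]
      exact h2 (j - 1) (by omega) (by omega)
  · intro H l t h1 h2
    rcases Nat.eq_zero_or_pos l with rfl | hl
    · exact absurd (h2 0 le_rfl (by omega)) (by simp [h0])
    · rw [show l + 2 * t + 1 = (l - 1 + 2 * t + 1) + 1 by omega, key]
      apply H (l - 1) t
      · rcases Nat.eq_zero_or_pos (l - 1) with h | h
        · exact Or.inl h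
        · right
          have hbit := h1.resolve_left (by omega)
          rw [show l - 1 = (l - 1 - 1) + 1 by omega, key] at hbit
          exact hbit
      · intro j hj hj'
        rw [← key]
        exact h2 (j + 1) (by omega) (by omega)

lemma deltaP_four_mul (v : ℕ) : DeltaP (4 * v) ↔ DeltaP v := by
  have key : ∀ j, (4 * v).testBit (j + 2) = v.testBit j := by
    intro j
    rw [Nat.testBit_add_one, Nat.testBit_add_one]
    congr 1; omega
  have h0 : (4 * v).testBit 0 = false := by
    rw [Nat.testBit_zero]; simp; omega
  have h1 : (4 * v).testBit 1 = false := by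
    rw [Nat.testBit_add_one, Nat.testBit_zero]; simp; omega
  constructor
  · intro H l t hyp1 hyp2
    rcases Nat.eq_zero_or_pos l with rfl | hl
    · -- use l = 0, t + 1 for 4*v
      have := H 0 (t + 1) (Or.inl rfl) ?_
      · rw [show 0 + 2 * (t + 1) + 1 = (0 + 2 * t + 1) + 2 by ring, key] at this
        exact this
      · intro j hj hj'
        match j, hj' with
        | 0, _ => exact h0
        | 1, _ => exact h1
        | (j + 2), hj' => rw [key]; exact hyp2 j (by omega) (by omega)
    · have := H (l + 2) t ?_ ?_
      · rw [show l + 2 + 2 * t + 1 = (l + 2 * t + 1) + 2 by ring, key] at this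
        exact this
      · right
        have := hyp1.resolve_left (by omega)
        rw [show l + 2 - 1 = (l - 1) + 2 by omega, key]; exact this
      · intro j hj hj'
        rw [show j = (j - 2) + 2 by omega, key]
        exact hyp2 (j - 2) (by omega) (by omega)
  · intro H l t hyp1 hyp2
    match l, hyp1 with
    | 0, _ =>
      rcases Nat.eq_zero_or_pos t with rfl | ht
      · simpa using h1
      · rw [show 0 + 2 * t + 1 = (0 + 2 * (t - 1) + 1) + 2 by omega, key]
        apply H 0 (t - 1) (Or.inl rfl)
        intro j hj hj'
        rw [← key]
        exact hyp2 (j + 2) (by omega) (by omega)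
    | 1, hyp1 =>
      exact absurd (hyp1.resolve_left (by omega)) (by simp [h0])
    | 2, hyp1 =>
      exact absurd (hyp1.resolve_left (by omega)) (by simp [h1])
    | (l + 3), hyp1 =>
      have hb := hyp1.resolve_left (by omega)
      rw [show l + 3 - 1 = l + 2 by omega, key] at hb
      rw [show l + 3 + 2 * t + 1 = (l + 1 + 2 * t + 1) + 2 by ring, key]
      apply H (l + 1) t (Or.inr (by simpa using hb))
      intro j hj hj'
      rw [← key]
      exact hyp2 (j + 2) (by omega) (by omega)

lemma deltaP_four_dvd {s : ℕ} (h : DeltaP s) (he : s % 2 = 0) : 4 ∣ s := by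
  have h0 : s.testBit 0 = false := by rw [Nat.testBit_zero]; simp; omega
  have h1 : s.testBit 1 = false := by
    have := h 0 0 (Or.inl rfl) (fun j hj hj' => by
      have : j = 0 := by omega
      subst this; exact h0)
    simpa using this
  rw [Nat.testBit_add_one, Nat.testBit_zero] at h1
  simp at h1
  omega

lemma deltaP_two_pow_sub_one (k : ℕ) : DeltaP (2 ^ k - 1) := by
  intro l t h1 h2
  have hl : k ≤ l := by
    by_contra hc
    have := h2 l le_rfl (by omega)
    rw [Nat.testBit_two_pow_sub_one] at this
    simp at this; omega
  rw [Nat.testBit_two_pow_sub_one]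
  simp; omega

open scoped Classical in
/-- The polynomial `P_i = Σ w2^p w3^((2^i + n + 1 - 2p)/3)` (with
`n = 2^(m+1) - 4`), summed over all `p < 2^m` whose `m`-bit binary expansion
has `i` trailing zeros followed by a string in `Δ_{m-i}`, and such that
`2^i + n + 1 - 2p` is divisible by `3`.  Here `X 0 = w2`, `X 1 = w3`. -/
noncomputable def Ppoly (m i : ℕ) : MvPolynomial (Fin 2) (ZMod 2) :=
  ∑ p ∈ (Finset.range (2 ^ m)).filter
      (fun p => 2 ^ i ∣ p ∧ InDelta (m - i) (p / 2 ^ i) ∧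
        3 ∣ (2 ^ i + (2 ^ (m + 1) - 4) + 1 - 2 * p)),
    X 0 ^ p * X 1 ^ ((2 ^ i + (2 ^ (m + 1) - 4) + 1 - 2 * p) / 3)

/-- The exponent pair `(deg_{w2}, deg_{w3})` of a monomial, in the
lexicographic order with `w2 > w3`. -/
def expPair (d : Fin 2 →₀ ℕ) : ℕ ×ₗ ℕ := toLex (d 0, d 1)

/-- The leading exponent of a polynomial: the lexicographically largest
exponent pair in its support (and `(0,0)` for the zero polynomial). -/
noncomputable def leadExp (f : MvPolynomial (Fin 2) (ZMod 2)) : ℕ × ℕ :=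
  ofLex (WithBot.unbotD (toLex (0, 0)) ((f.support.image expPair).max))

/-- The `S`-polynomial
`S(F,G) = (LCM(LT F, LT G)/LT F)·F + (LCM(LT F, LT G)/LT G)·G`
(over `ℤ/2`, where leading coefficients are `1`). -/
noncomputable def Spoly (F G : MvPolynomial (Fin 2) (ZMod 2)) :
    MvPolynomial (Fin 2) (ZMod 2) :=
  let a := leadExp F
  let b := leadExp G
  let L := (max a.1 b.1, max a.2 b.2)
  X 0 ^ (L.1 - a.1) * X 1 ^ (L.2 - a.2) * F +
    X 0 ^ (L.1 - b.1) * X 1 ^ (L.2 - b.2) * G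


open scoped Classical in
noncomputable def SS (m i : ℕ) : Finset ℕ :=
  (Finset.range (2 ^ m)).filter
      (fun p => 2 ^ i ∣ p ∧ InDelta (m - i) (p / 2 ^ i) ∧
        3 ∣ (2 ^ i + (2 ^ (m + 1) - 4) + 1 - 2 * p))

def ee (m i p : ℕ) : ℕ := (2 ^ i + (2 ^ (m + 1) - 4) + 1 - 2 * p) / 3

noncomputable def vv (m i p : ℕ) : Fin 2 →₀ ℕ :=
  Finsupp.single 0 p + Finsupp.single 1 (ee m i p)

lemma vv_apply0 (m i p : ℕ) : vv m i p 0 = p := by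
  simp [vv]

lemma vv_apply1 (m i p : ℕ) : vv m i p 1 = ee m i p := by
  simp [vv]

lemma vv_inj {m i p p' : ℕ} (h : vv m i p = vv m i p') : p = p' := by
  have := congrArg (fun d => d 0) h
  simpa [vv_apply0] using this

lemma Ppoly_eq (m i : ℕ) :
    Ppoly m i = ∑ p ∈ SS m i, monomial (vv m i p) (1 : ZMod 2) := by
  rw [Ppoly, SS]
  refine Finset.sum_congr rfl fun p _ => ?_
  rw [X_pow_eq_monomial, X_pow_eq_monomial, monomial_mul, one_mul]
  rfl

lemma coeff_Ppoly_ne_zero {m i : ℕ} {d : Fin 2 →₀ ℕ}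
    (h : coeff d (Ppoly m i) ≠ 0) : ∃ p ∈ SS m i, d = vv m i p := by
  rw [Ppoly_eq, coeff_sum] at h
  obtain ⟨p, hp, hne⟩ := Finset.exists_ne_zero_of_sum_ne_zero h
  refine ⟨p, hp, ?_⟩
  rw [coeff_monomial] at hne
  by_contra hd
  exact hne (if_neg (fun hh => hd hh.symm))

lemma coeff_Ppoly_vv {m i p₀ : ℕ} (h : p₀ ∈ SS m i) :
    coeff (vv m i p₀) (Ppoly m i) = 1 := by
  rw [Ppoly_eq, coeff_sum]
  have hcongr : ∀ p ∈ SS m i,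
      coeff (vv m i p₀) (monomial (vv m i p) (1 : ZMod 2)) =
        if p = p₀ then 1 else 0 := by
    intro p _
    rw [coeff_monomial]
    exact if_congr ⟨fun hh => vv_inj hh, fun hh => by rw [hh]⟩ rfl rfl
  rw [Finset.sum_congr rfl hcongr, Finset.sum_ite_eq' (SS m i) p₀ (fun _ => (1 : ZMod 2)),
    if_pos h]

lemma top_mem (m i : ℕ) (hm : 2 ≤ m) (h : i ≤ m) :
    2 ^ m - 2 ^ i ∈ SS m i ∧ ee m i (2 ^ m - 2 ^ i) = 2 ^ i - 1 := by
  have ha : (1 : ℕ) ≤ 2 ^ i := Nat.one_le_two_pow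
  have haM : 2 ^ i ≤ 2 ^ m := Nat.pow_le_pow_right (by norm_num) h
  have h4 : (4 : ℕ) ≤ 2 ^ m := by
    calc (4 : ℕ) = 2 ^ 2 := by norm_num
    _ ≤ 2 ^ m := Nat.pow_le_pow_right (by norm_num) hm
  have h2m : 2 ^ (m + 1) = 2 * 2 ^ m := by ring
  have hMfac : 2 ^ m = 2 ^ i * 2 ^ (m - i) := by
    rw [← pow_add]; congr 1; omega
  have hfac : 2 ^ m - 2 ^ i = 2 ^ i * (2 ^ (m - i) - 1) := by
    rw [hMfac, Nat.mul_sub, mul_one]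
  have hdvd3 : 2 ^ i + (2 ^ (m + 1) - 4) + 1 - 2 * (2 ^ m - 2 ^ i) = 3 * (2 ^ i - 1) := by
    omega
  constructor
  · simp only [SS, Finset.mem_filter, Finset.mem_range]
    refine ⟨by omega, ⟨2 ^ (m - i) - 1, hfac⟩, ?_, by omega⟩
    rw [hfac, Nat.mul_div_cancel_left _ (by positivity)]
    have hpos : (0:ℕ) < 2 ^ (m - i) := by positivity
    rw [inDelta_iff_deltaP (by omega)]
    exact deltaP_two_pow_sub_one _
  · rw [ee, hdvd3]
    omega

lemma leadExp_Ppoly (m i : ℕ) (hm : 2 ≤ m) (h : i ≤ m) :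
    leadExp (Ppoly m i) = (2 ^ m - 2 ^ i, 2 ^ i - 1) := by
  obtain ⟨hmem₀, hee₀⟩ := top_mem m i hm h
  have ha : (1 : ℕ) ≤ 2 ^ i := Nat.one_le_two_pow
  have haM : 2 ^ i ≤ 2 ^ m := Nat.pow_le_pow_right (by norm_num) h
  set p₀ := 2 ^ m - 2 ^ i with hp₀
  have himg : (toLex (p₀, 2 ^ i - 1) : ℕ ×ₗ ℕ) ∈ (Ppoly m i).support.image expPair := by
    refine Finset.mem_image.mpr ⟨vv m i p₀, ?_, ?_⟩
    · rw [MvPolynomial.mem_support_iff, coeff_Ppoly_vv hmem₀]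
      norm_num
    · rw [expPair, vv_apply0, vv_apply1, hee₀]
  have hle : ∀ x ∈ (Ppoly m i).support.image expPair, x ≤ toLex (p₀, 2 ^ i - 1) := by
    intro x hx
    obtain ⟨d, hd, rfl⟩ := Finset.mem_image.mp hx
    rw [MvPolynomial.mem_support_iff] at hd
    obtain ⟨p, hp, rfl⟩ := coeff_Ppoly_ne_zero hd
    rw [expPair, vv_apply0, vv_apply1, Prod.Lex.le_iff]
    simp only [SS, Finset.mem_filter, Finset.mem_range] at hp
    obtain ⟨hplt, ⟨c, hc⟩, _, _⟩ := hp
    by_cases hpp : p = p₀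
    · right
      subst hpp
      exact ⟨rfl, le_of_eq hee₀⟩
    · left
      have hMfac : 2 ^ m = 2 ^ i * 2 ^ (m - i) := by
        rw [← pow_add]; congr 1; omega
      have hclt : c < 2 ^ (m - i) := by
        by_contra hcc
        push_neg at hcc
        have : 2 ^ i * 2 ^ (m - i) ≤ 2 ^ i * c := Nat.mul_le_mul_left _ hcc
        omega
      have hcle : c ≤ 2 ^ (m - i) - 1 := by omega
      have hfac : p₀ = 2 ^ i * (2 ^ (m - i) - 1) := by
        rw [hp₀, hMfac, Nat.mul_sub, mul_one]
      have hcne : c ≠ 2 ^ (m - i) - 1 := by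
        intro hcc
        exact hpp (by rw [hc, hcc, ← hfac])
      have : 2 ^ i * c < 2 ^ i * (2 ^ (m - i) - 1) :=
        (Nat.mul_lt_mul_left (by positivity)).mpr (by omega)
      show p < p₀
      omega
  have hmax : ((Ppoly m i).support.image expPair).max = (toLex (p₀, 2 ^ i - 1) : ℕ ×ₗ ℕ) :=
    le_antisymm (Finset.max_le fun x hx => WithBot.coe_le_coe.mpr (hle x hx))
      (Finset.le_max himg)
  rw [leadExp, hmax]
  rfl

lemma spoly_eq (m i : ℕ) (hm : 2 ≤ m) (hi : i + 1 ≤ m) :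
    Spoly (Ppoly m i) (Ppoly m (i + 1)) =
      X 1 ^ (2 ^ i) * Ppoly m i + X 0 ^ (2 ^ i) * Ppoly m (i + 1) := by
  have ha : (1 : ℕ) ≤ 2 ^ i := Nat.one_le_two_pow
  have h2 : 2 ^ (i + 1) = 2 * 2 ^ i := by ring
  have haM : 2 ^ (i + 1) ≤ 2 ^ m := Nat.pow_le_pow_right (by norm_num) hi
  rw [Spoly, leadExp_Ppoly m i hm (by omega), leadExp_Ppoly m (i + 1) hm hi]
  have e1 : max (2 ^ m - 2 ^ i) (2 ^ m - 2 ^ (i + 1)) = 2 ^ m - 2 ^ i := by omega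
  have e2 : max (2 ^ i - 1) (2 ^ (i + 1) - 1) = 2 ^ (i + 1) - 1 := by omega
  simp only [e1, e2]
  rw [show 2 ^ m - 2 ^ i - (2 ^ m - 2 ^ i) = 0 by omega,
    show 2 ^ (i + 1) - 1 - (2 ^ i - 1) = 2 ^ i by omega,
    show 2 ^ m - 2 ^ i - (2 ^ m - 2 ^ (i + 1)) = 2 ^ i by omega,
    show 2 ^ (i + 1) - 1 - (2 ^ (i + 1) - 1) = 0 by omega,
    pow_zero, pow_zero, one_mul, mul_one]

lemma ee_shift1 {m i p : ℕ} (hi : i + 2 ≤ m) (hp : p ∈ SS m i) :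
    2 ^ i + ee m i p = ee m (i + 2) p := by
  simp only [SS, Finset.mem_filter, Finset.mem_range] at hp
  obtain ⟨hplt, -, -, hdvd⟩ := hp
  have ha : (1 : ℕ) ≤ 2 ^ i := Nat.one_le_two_pow
  have h4 : 2 ^ (i + 2) = 4 * 2 ^ i := by ring
  have h2m : 2 ^ (m + 1) = 2 * 2 ^ m := by ring
  have h4M : 4 * 2 ^ i ≤ 2 ^ m := by
    rw [← h4]; exact Nat.pow_le_pow_right (by norm_num) hi
  simp only [ee]
  omega

lemma ee_shift2 (m i p : ℕ) : ee m (i + 1) p = ee m (i + 2) (p + 2 ^ i) := by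
  simp only [ee]
  congr 1
  have h2 : 2 ^ (i + 1) = 2 * 2 ^ i := by ring
  have h4 : 2 ^ (i + 2) = 4 * 2 ^ i := by ring
  omega

lemma dvd_iff_up (m i r : ℕ) (hi : i + 2 ≤ m) (hrlt : r < 2 ^ m) :
    (3 ∣ 2 ^ i + (2 ^ (m + 1) - 4) + 1 - 2 * r) ↔
      (3 ∣ 2 ^ (i + 2) + (2 ^ (m + 1) - 4) + 1 - 2 * r) := by
  have ha : (1 : ℕ) ≤ 2 ^ i := Nat.one_le_two_pow
  have h4 : 2 ^ (i + 2) = 4 * 2 ^ i := by ring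
  have h2m : 2 ^ (m + 1) = 2 * 2 ^ m := by ring
  have h4M : 4 * 2 ^ i ≤ 2 ^ m := by
    rw [← h4]; exact Nat.pow_le_pow_right (by norm_num) hi
  omega

lemma dvd_iff_mid (m i p r : ℕ) (hi : i + 2 ≤ m) (hrp : p + 2 ^ i = r) (hrlt : r < 2 ^ m) :
    (3 ∣ 2 ^ (i + 1) + (2 ^ (m + 1) - 4) + 1 - 2 * p) ↔
      (3 ∣ 2 ^ i + (2 ^ (m + 1) - 4) + 1 - 2 * r) := by
  have ha : (1 : ℕ) ≤ 2 ^ i := Nat.one_le_two_pow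
  have h2 : 2 ^ (i + 1) = 2 * 2 ^ i := by ring
  have h4 : 2 ^ (i + 2) = 4 * 2 ^ i := by ring
  have h2m : 2 ^ (m + 1) = 2 * 2 ^ m := by ring
  have h4M : 4 * 2 ^ i ≤ 2 ^ m := by
    rw [← h4]; exact Nat.pow_le_pow_right (by norm_num) hi
  omega

lemma main_identity (m i : ℕ) (hm : 2 ≤ m) (hi : i + 2 ≤ m) :
    X 1 ^ (2 ^ i) * Ppoly m i + X 0 ^ (2 ^ i) * Ppoly m (i + 1) = Ppoly m (i + 2) := by
  classical
  have ha : (1 : ℕ) ≤ 2 ^ i := Nat.one_le_two_pow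
  have h2 : 2 ^ (i + 1) = 2 * 2 ^ i := by ring
  have h4 : 2 ^ (i + 2) = 4 * 2 ^ i := by ring
  have h2m : 2 ^ (m + 1) = 2 * 2 ^ m := by ring
  have h4M : 4 * 2 ^ i ≤ 2 ^ m := by
    rw [← h4]; exact Nat.pow_le_pow_right (by norm_num) hi
  have hK1 : 2 ^ (m - i) = 2 * 2 ^ (m - i - 1) := by
    rw [← pow_succ']; congr 1; omega
  have hK2 : 2 ^ (m - i) = 4 * 2 ^ (m - i - 2) := by
    rw [show (4 : ℕ) = 2 ^ 2 by norm_num, ← pow_add]; congr 1; omega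
  have hMfac : 2 ^ m = 2 ^ i * 2 ^ (m - i) := by
    rw [← pow_add]; congr 1; omega
  rw [Ppoly_eq, Ppoly_eq, Ppoly_eq, Finset.mul_sum, Finset.mul_sum]
  have hL : ∀ p ∈ SS m i,
      X 1 ^ (2 ^ i) * monomial (vv m i p) (1 : ZMod 2) = monomial (vv m (i + 2) p) 1 := by
    intro p hp
    rw [X_pow_eq_monomial, monomial_mul, one_mul]
    congr 1
    rw [vv, vv, add_left_comm, ← Finsupp.single_add, ee_shift1 hi hp]
  have hR : ∀ p ∈ SS m (i + 1),
      X 0 ^ (2 ^ i) * monomial (vv m (i + 1) p) (1 : ZMod 2) =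
        monomial (vv m (i + 2) (p + 2 ^ i)) 1 := by
    intro p _
    rw [X_pow_eq_monomial, monomial_mul, one_mul]
    congr 1
    rw [vv, vv, ← add_assoc, ← Finsupp.single_add, ← ee_shift2, add_comm (2 ^ i) p]
  rw [Finset.sum_congr rfl hL, Finset.sum_congr rfl hR]
  have himg : ∑ p ∈ SS m (i + 1), (monomial (vv m (i + 2) (p + 2 ^ i)) (1 : ZMod 2)) =
      ∑ r ∈ (SS m (i + 1)).image (· + 2 ^ i), monomial (vv m (i + 2) r) 1 :=
    (Finset.sum_image (g := (· + 2 ^ i))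
      (f := fun r => (monomial (vv m (i + 2) r) (1 : ZMod 2)))
      (fun x _ y _ h => by simpa using h)).symm
  rw [himg]
  have hBA : (SS m (i + 1)).image (· + 2 ^ i) ⊆ SS m i := by
    intro r hr
    obtain ⟨p, hp, rfl⟩ := Finset.mem_image.mp hr
    simp only [SS, Finset.mem_filter, Finset.mem_range] at hp ⊢
    obtain ⟨hplt, ⟨c, hc⟩, hdel, hdvd⟩ := hp
    have hM1 : 2 ^ m = 2 ^ (i + 1) * 2 ^ (m - i - 1) := by
      rw [← pow_add]; congr 1; omega
    have hcb : c < 2 ^ (m - i - 1) := by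
      apply (Nat.mul_lt_mul_left (a := 2 ^ (i + 1)) (by positivity)).mp
      omega
    have hple : p ≤ 2 ^ m - 2 ^ (i + 1) := by
      have : 2 ^ (i + 1) * c ≤ 2 ^ (i + 1) * (2 ^ (m - i - 1) - 1) :=
        Nat.mul_le_mul_left _ (by omega)
      rw [Nat.mul_sub, mul_one] at this
      omega
    have hfac : p + 2 ^ i = 2 ^ i * (2 * c + 1) := by rw [hc, h2]; ring
    refine ⟨by omega, ⟨2 * c + 1, hfac⟩, ?_,
      (dvd_iff_mid m i p (p + 2 ^ i) hi rfl (by omega)).mp hdvd⟩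
    rw [hfac, Nat.mul_div_cancel_left _ (by positivity)]
    rw [inDelta_iff_deltaP (by omega)]
    rw [deltaP_two_mul_add_one]
    have hcdiv : p / 2 ^ (i + 1) = c := by rw [hc, Nat.mul_div_cancel_left _ (by positivity)]
    rw [hcdiv] at hdel
    rw [inDelta_iff_deltaP (show c < 2 ^ (m - (i + 1)) by
      rw [show m - (i + 1) = m - i - 1 by omega]; omega)] at hdel
    exact hdel
  have hC : SS m i \ (SS m (i + 1)).image (· + 2 ^ i) = SS m (i + 2) := by
    ext r
    rw [Finset.mem_sdiff]
    constructor
    · rintro ⟨hA, hB⟩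
      simp only [SS, Finset.mem_filter, Finset.mem_range] at hA ⊢
      obtain ⟨hrlt, ⟨s, hs⟩, hdel, hdvd⟩ := hA
      have hsb : s < 2 ^ (m - i) := by
        apply (Nat.mul_lt_mul_left (a := 2 ^ i) (by positivity)).mp
        omega
      have hsdiv : r / 2 ^ i = s := by rw [hs, Nat.mul_div_cancel_left _ (by positivity)]
      rw [hsdiv, inDelta_iff_deltaP hsb] at hdel
      -- s must be even
      have hseven : s % 2 = 0 := by
        by_contra hodd
        apply hB
        rw [Finset.mem_image]
        obtain ⟨u, hu⟩ : ∃ u, s = 2 * u + 1 := ⟨s / 2, by omega⟩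
        subst hu
        have hq_add : 2 ^ (i + 1) * u + 2 ^ i = r := by rw [hs, h2]; ring
        refine ⟨2 ^ (i + 1) * u, ?_, hq_add⟩
        simp only [SS, Finset.mem_filter, Finset.mem_range]
        refine ⟨by omega, ⟨u, rfl⟩, ?_,
          (dvd_iff_mid m i (2 ^ (i + 1) * u) r hi hq_add hrlt).mpr hdvd⟩
        rw [Nat.mul_div_cancel_left _ (by positivity)]
        rw [inDelta_iff_deltaP (show u < 2 ^ (m - (i + 1)) by
          rw [show m - (i + 1) = m - i - 1 by omega]; omega)]
        exact (deltaP_two_mul_add_one u).mp hdel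
      have h4s : 4 ∣ s := deltaP_four_dvd hdel hseven
      obtain ⟨v, hv⟩ := h4s
      subst hv
      have hfac4 : r = 2 ^ (i + 2) * v := by rw [hs, h4]; ring
      refine ⟨hrlt, ⟨v, hfac4⟩, ?_, (dvd_iff_up m i r hi hrlt).mp hdvd⟩
      rw [hfac4, Nat.mul_div_cancel_left _ (by positivity)]
      rw [inDelta_iff_deltaP (show v < 2 ^ (m - (i + 2)) by
        rw [show m - (i + 2) = m - i - 2 by omega]; omega)]
      exact (deltaP_four_mul v).mp hdel
    · intro hCmem
      simp only [SS, Finset.mem_filter, Finset.mem_range] at hCmem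
      obtain ⟨hrlt, ⟨v, hv⟩, hdel, hdvd⟩ := hCmem
      have hvdiv : r / 2 ^ (i + 2) = v := by rw [hv, Nat.mul_div_cancel_left _ (by positivity)]
      have hvb : v < 2 ^ (m - (i + 2)) := by
        apply (Nat.mul_lt_mul_left (a := 2 ^ (i + 2)) (by positivity)).mp
        rw [← hv]
        calc r < 2 ^ m := hrlt
        _ = 2 ^ (i + 2) * 2 ^ (m - (i + 2)) := by rw [← pow_add]; congr 1; omega
      rw [hvdiv, inDelta_iff_deltaP hvb] at hdel
      constructor
      · simp only [SS, Finset.mem_filter, Finset.mem_range]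
        have hfac : r = 2 ^ i * (4 * v) := by rw [hv, h4]; ring
        refine ⟨hrlt, ⟨4 * v, hfac⟩, ?_, (dvd_iff_up m i r hi hrlt).mpr hdvd⟩
        have hvb' : 4 * v < 2 ^ (m - i) := by
          have heq : (2 : ℕ) ^ (m - (i + 2)) = 2 ^ (m - i - 2) := by congr 1
          rw [heq] at hvb
          omega
        rw [hfac, Nat.mul_div_cancel_left _ (by positivity)]
        rw [inDelta_iff_deltaP hvb']
        exact (deltaP_four_mul v).mpr hdel
      · rw [Finset.mem_image]
        rintro ⟨p, hp, hpr⟩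
        simp only [SS, Finset.mem_filter, Finset.mem_range] at hp
        obtain ⟨-, ⟨c, hc⟩, -, -⟩ := hp
        have hkey : 2 ^ i * (2 * c + 1) = 2 ^ i * (4 * v) := by
          calc 2 ^ i * (2 * c + 1) = 2 ^ (i + 1) * c + 2 ^ i := by rw [h2]; ring
          _ = p + 2 ^ i := by rw [hc]
          _ = r := hpr
          _ = 2 ^ (i + 2) * v := hv
          _ = 2 ^ i * (4 * v) := by rw [h4]; ring
        have := Nat.eq_of_mul_eq_mul_left (show 0 < 2 ^ i by positivity) hkey
        omega
  calc ∑ p ∈ SS m i, (monomial (vv m (i + 2) p) (1 : ZMod 2)) +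
        ∑ r ∈ (SS m (i + 1)).image (· + 2 ^ i), monomial (vv m (i + 2) r) 1
      = (∑ p ∈ SS m i \ (SS m (i + 1)).image (· + 2 ^ i), monomial (vv m (i + 2) p) (1 : ZMod 2) +
          ∑ r ∈ (SS m (i + 1)).image (· + 2 ^ i), monomial (vv m (i + 2) r) 1) +
        ∑ r ∈ (SS m (i + 1)).image (· + 2 ^ i), monomial (vv m (i + 2) r) 1 := by
        rw [Finset.sum_sdiff hBA]
    _ = ∑ p ∈ SS m i \ (SS m (i + 1)).image (· + 2 ^ i), monomial (vv m (i + 2) p) (1 : ZMod 2) +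
        (∑ r ∈ (SS m (i + 1)).image (· + 2 ^ i), monomial (vv m (i + 2) r) 1 +
          ∑ r ∈ (SS m (i + 1)).image (· + 2 ^ i), monomial (vv m (i + 2) r) 1) := by
        rw [add_assoc]
    _ = ∑ p ∈ SS m i \ (SS m (i + 1)).image (· + 2 ^ i), monomial (vv m (i + 2) p) (1 : ZMod 2) := by
        rw [CharTwo.add_self_eq_zero, add_zero]
    _ = ∑ p ∈ SS m (i + 2), monomial (vv m (i + 2) p) (1 : ZMod 2) := by rw [hC]

/-- For `m ≥ 2` and `0 ≤ i ≤ m - 2`, the `S`-polynomial relation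
`S(P_i, P_{i+1}) = P_{i+2}` holds. -/
theorem spoly_relation (m : ℕ) (hm : 2 ≤ m) (i : ℕ) (hi : i + 2 ≤ m) :
    Spoly (Ppoly m i) (Ppoly m (i + 1)) = Ppoly m (i + 2) := by
  rw [spoly_eq m i hm (by omega), main_identity m i hm hi]
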